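/- Let S ⊆ ℕ² be a good semigroup with conductor C. Then S has the Arf property if and only if for all a, b, c ∈ Small(S) with b ≥ a and c ≥ a, one has b + c − a ∈ S. -/

import Mathlib

/-- A good semigroup of `ℕ^n`: a submonoid satisfying (G1), (G2), (G3). -/
def IsGoodSemigroup {n : ℕ} (S : Set (Fin n → ℕ)) : Prop :=
  0 ∈ S ∧ (∀ a ∈ S, ∀ b ∈ S, a + b ∈ S) ∧
  (∀ a ∈ S, ∀ b ∈ S, a ⊓ b ∈ S) ∧
  (∀ a ∈ S, ∀ b ∈ S, ∀ i, a i = b i →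
    ∃ c ∈ S, a i < c i ∧ (∀ j, j ≠ i → min (a j) (b j) ≤ c j) ∧
      (∀ j, j ≠ i → a j ≠ b j → c j = min (a j) (b j))) ∧
  (∃ C, ∀ x, C ≤ x → x ∈ S)

/-- `C` is the conductor of `S ⊆ ℕ^n`. -/
def IsConductor {n : ℕ} (S : Set (Fin n → ℕ)) (C : Fin n → ℕ) : Prop :=
  (∀ x, C ≤ x → x ∈ S) ∧ ∀ C', (∀ x, C' ≤ x → x ∈ S) → C ≤ C'

lemma fin2_other {i j k : Fin 2} (h1 : j ≠ i) (h2 : k ≠ i) : k = j := by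
  revert h1 h2; revert i j k; decide

lemma climb {S : Set (Fin 2 → ℕ)} (hS : IsGoodSemigroup S) {C : Fin 2 → ℕ}
    (hCS : ∀ x, C ≤ x → x ∈ S) {s : Fin 2 → ℕ} (hs : s ∈ S)
    (i j : Fin 2) (hij : j ≠ i) (hsi : s i < C i) (hsj : C j ≤ s j) :
    ∀ m, ∃ u ∈ S, u i = s i ∧ m ≤ u j ∧ C j ≤ u j := by
  intro m
  induction m with
  | zero => exact ⟨s, hs, rfl, Nat.zero_le _, hsj⟩
  | succ m ih =>
    obtain ⟨u, hu, hui, hum, huC⟩ := ih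
    rcases Nat.lt_or_ge m (u j) with h | h
    · exact ⟨u, hu, hui, h, huC⟩
    · have huj : u j = m := le_antisymm h hum
      set b : Fin 2 → ℕ := fun k => if k = i then C i else u k with hb
      have hbS : b ∈ S := by
        apply hCS
        intro k
        by_cases hk : k = i
        · subst hk; simp [hb]
        · have hkj : k = j := fin2_other hij hk
          subst hkj
          simp only [hb, if_neg hk]
          exact huC
      have hbj : u j = b j := by simp [hb, hij]
      obtain ⟨c, hc, hcj, -, hcmin⟩ := hS.2.2.2.1 u hu b hbS j hbj
      have hci : c i = s i := by
        have hne : u i ≠ b i := by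
          simp only [hb, if_pos rfl, hui]
          omega
        have := hcmin i hij.symm hne
        simp only [hb, if_pos rfl, hui] at this
        omega
      exact ⟨c, hc, hci, by omega, by omega⟩

theorem arf_iff_arf_on_small {S : Set (Fin 2 → ℕ)}
    (hS : IsGoodSemigroup S) (C : Fin 2 → ℕ) (hC : IsConductor S C) :
    (∀ a ∈ S, ∀ b ∈ S, ∀ c ∈ S, a ≤ b → a ≤ c → b + c - a ∈ S) ↔
      (∀ a ∈ {s ∈ S | s ≤ C}, ∀ b ∈ {s ∈ S | s ≤ C}, ∀ c ∈ {s ∈ S | s ≤ C},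
        a ≤ b → a ≤ c → b + c - a ∈ S) := by
  have hcond := hC.1
  constructor
  · intro H a ha b hb c hc hab hac
    exact H a ha.1 b hb.1 c hc.1 hab hac
  · intro H a ha b hb c hc hab hac
    have hCS : C ∈ S := hcond C le_rfl
    have hinf := hS.2.2.1
    have ha' : a ⊓ C ∈ S := hinf a ha C hCS
    have hb' : b ⊓ C ∈ S := hinf b hb C hCS
    have hc' : c ⊓ C ∈ S := hinf c hc C hCS
    have ht' : (b ⊓ C) + (c ⊓ C) - (a ⊓ C) ∈ S :=
      H _ ⟨ha', inf_le_right⟩ _ ⟨hb', inf_le_right⟩ _ ⟨hc', inf_le_right⟩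
        (inf_le_inf_right C hab) (inf_le_inf_right C hac)
    have key : ∀ i : Fin 2,
        ((b ⊓ C) + (c ⊓ C) - (a ⊓ C)) i ≤ (b + c - a) i ∧
        ((b + c - a) i < C i → ((b ⊓ C) + (c ⊓ C) - (a ⊓ C)) i = (b + c - a) i) ∧
        (C i ≤ (b + c - a) i → C i ≤ ((b ⊓ C) + (c ⊓ C) - (a ⊓ C)) i) := by
      intro i
      have h1 : a i ≤ b i := hab i
      have h2 : a i ≤ c i := hac i
      simp only [Pi.sub_apply, Pi.add_apply, Pi.inf_apply]
      omega
    rcases Nat.lt_or_ge ((b + c - a) 0) (C 0) with h0 | h0 <;>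
      rcases Nat.lt_or_ge ((b + c - a) 1) (C 1) with h1 | h1
    · -- both coordinates below the conductor
      have heq : b + c - a = (b ⊓ C) + (c ⊓ C) - (a ⊓ C) := by
        funext k; fin_cases k
        · exact ((key 0).2.1 h0).symm
        · exact ((key 1).2.1 h1).symm
      rw [heq]; exact ht'
    · -- coordinate 0 below, coordinate 1 above
      have hs0 : ((b ⊓ C) + (c ⊓ C) - (a ⊓ C)) 0 = (b + c - a) 0 := (key 0).2.1 h0
      have hs1 : C 1 ≤ ((b ⊓ C) + (c ⊓ C) - (a ⊓ C)) 1 := (key 1).2.2 h1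
      obtain ⟨u, hu, hui, huj, -⟩ :=
        climb hS hcond ht' 0 1 (by decide) (by omega) hs1 ((b + c - a) 1)
      have hY : C ⊔ (b + c - a) ∈ S := hcond _ le_sup_left
      have hmem : u ⊓ (C ⊔ (b + c - a)) ∈ S := hinf u hu _ hY
      have e0 : (b + c - a) 0 = (u ⊓ (C ⊔ (b + c - a))) 0 := by
        simp only [Pi.inf_apply, Pi.sup_apply]
        omega
      have e1 : (b + c - a) 1 = (u ⊓ (C ⊔ (b + c - a))) 1 := by
        simp only [Pi.inf_apply, Pi.sup_apply]
        omega
      have heq : b + c - a = u ⊓ (C ⊔ (b + c - a)) := by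
        funext k; fin_cases k
        · exact e0
        · exact e1
      rw [heq]; exact hmem
    · -- coordinate 1 below, coordinate 0 above
      have hs1 : ((b ⊓ C) + (c ⊓ C) - (a ⊓ C)) 1 = (b + c - a) 1 := (key 1).2.1 h1
      have hs0 : C 0 ≤ ((b ⊓ C) + (c ⊓ C) - (a ⊓ C)) 0 := (key 0).2.2 h0
      obtain ⟨u, hu, hui, huj, -⟩ :=
        climb hS hcond ht' 1 0 (by decide) (by omega) hs0 ((b + c - a) 0)
      have hY : C ⊔ (b + c - a) ∈ S := hcond _ le_sup_left
      have hmem : u ⊓ (C ⊔ (b + c - a)) ∈ S := hinf u hu _ hY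
      have e0 : (b + c - a) 0 = (u ⊓ (C ⊔ (b + c - a))) 0 := by
        simp only [Pi.inf_apply, Pi.sup_apply]
        omega
      have e1 : (b + c - a) 1 = (u ⊓ (C ⊔ (b + c - a))) 1 := by
        simp only [Pi.inf_apply, Pi.sup_apply]
        omega
      have heq : b + c - a = u ⊓ (C ⊔ (b + c - a)) := by
        funext k; fin_cases k
        · exact e0
        · exact e1
      rw [heq]; exact hmem
    · -- both coordinates above the conductor
      apply hcond
      intro k; fin_cases k
      · exact h0
      · exact h1
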